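/- For 1/3 < r < 1 and all real x, the Schwarzian derivative of R̃, namely R̃'''(x)/R̃'(x) − (3/2)(R̃''(x)/R̃'(x))², is strictly negative (wherever R̃'(x) ≠ 0). Equivalently it equals r(1−r²)H(r, cos x) / ((1 − 4r·cos x + 3r²)²(1 − 2r·cos x + r²)²) with H(r, cos x) < 0. -/

import Mathlib

open Real

/-- The incident angle function of the off-center reflection. -/
noncomputable def iota (r x : ℝ) : ℝ :=
  Complex.arg ((Real.cos x - r : ℝ) + (Real.sin x : ℝ) * Complex.I) - x

/-- Lift of the off-center reflection taking 0 to Ω. -/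
noncomputable def Rt (r Ω x : ℝ) : ℝ := x + Ω - 2 * iota r x
/-- Numerator factor in the Schwarzian derivative of the off-center reflection. -/
noncomputable def H (r y : ℝ) : ℝ :=
  -(14 * r + 18 * r ^ 3) + (2 + 40 * r ^ 2 + 6 * r ^ 4) * y
    + 2 * r * (1 - r ^ 2) * y ^ 2 - 16 * r ^ 2 * y ^ 3

noncomputable def zf (r x : ℝ) : ℂ :=
  (Real.cos x - r : ℝ) + (Real.sin x : ℝ) * Complex.I

noncomputable def Dd (r x : ℝ) : ℝ := 1 - 2 * r * Real.cos x + r ^ 2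
noncomputable def F1 (r x : ℝ) : ℝ := (1 - 4 * r * Real.cos x + 3 * r ^ 2) / Dd r x
noncomputable def F2 (r x : ℝ) : ℝ := 2 * r * (1 - r ^ 2) * Real.sin x / (Dd r x) ^ 2
noncomputable def F3 (r x : ℝ) : ℝ :=
  2 * r * (1 - r ^ 2) * ((1 + r ^ 2) * Real.cos x - 2 * r * (1 + Real.sin x ^ 2)) / (Dd r x) ^ 3

lemma hDpos {r : ℝ} (hr0 : 0 < r) (hr1 : r < 1) (x : ℝ) : 0 < Dd r x := by
  have h := Real.cos_le_one x
  unfold Dd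
  nlinarith [sq_nonneg (1 - r)]

lemma zf_re (r x : ℝ) : (zf r x).re = Real.cos x - r := by simp [zf, Complex.cos_ofReal_re]
lemma zf_im (r x : ℝ) : (zf r x).im = Real.sin x := by simp [zf, Complex.sin_ofReal_re]

lemma hz_deriv (r x : ℝ) :
    HasDerivAt (zf r) ((-Real.sin x : ℝ) + (Real.cos x : ℝ) * Complex.I) x := by
  have h1 : HasDerivAt (fun y : ℝ => ((Real.cos y - r : ℝ) : ℂ)) ((-Real.sin x : ℝ) : ℂ) x :=
    ((Real.hasDerivAt_cos x).sub_const r).ofReal_comp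
  have h2 : HasDerivAt (fun y : ℝ => ((Real.sin y : ℝ) : ℂ) * Complex.I)
      (((Real.cos x : ℝ) : ℂ) * Complex.I) x :=
    (Real.hasDerivAt_sin x).ofReal_comp.mul_const Complex.I
  exact h1.add h2

lemma zf_normSq (r x : ℝ) : Complex.normSq (zf r x) = Dd r x := by
  rw [Complex.normSq_apply, zf_re, zf_im]
  unfold Dd
  nlinarith [Real.sin_sq_add_cos_sq x]

lemma cos_eq_of_sin_zero {x : ℝ} (hs : Real.sin x = 0) :
    Real.cos x = 1 ∨ Real.cos x = -1 := by
  have h : (Real.cos x - 1) * (Real.cos x + 1) = 0 := by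
    nlinarith [Real.sin_sq_add_cos_sq x]
  rcases mul_eq_zero.mp h with h | h
  · left; linarith
  · right; linarith

lemma zf_slit {r : ℝ} (hr1 : r < 1) {x : ℝ} (hx : Real.cos x ≠ -1) :
    zf r x ∈ Complex.slitPlane := by
  rw [Complex.mem_slitPlane_iff, zf_re, zf_im]
  rcases eq_or_ne (Real.sin x) 0 with hs | hs
  · left
    rcases cos_eq_of_sin_zero hs with h | h
    · rw [h]; linarith
    · exact absurd h hx
  · right; exact hs

lemma zf_ne_zero {r : ℝ} (hr0 : 0 < r) (hr1 : r < 1) (x : ℝ) : zf r x ≠ 0 := by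
  intro h
  have := zf_normSq r x
  rw [h, map_zero] at this
  exact absurd this.symm (ne_of_gt (hDpos hr0 hr1 x))

lemma arg_deriv {r : ℝ} (hr0 : 0 < r) (hr1 : r < 1) {x : ℝ} (hx : Real.cos x ≠ -1) :
    HasDerivAt (fun y => Complex.arg (zf r y)) ((1 - r * Real.cos x) / Dd r x) x := by
  have hlog : HasDerivAt (fun y => Complex.log (zf r y))
      (((-Real.sin x : ℝ) + (Real.cos x : ℝ) * Complex.I) / zf r x) x :=
    (hz_deriv r x).clog_real (zf_slit hr1 hx)
  have him : HasDerivAt (fun y => (Complex.log (zf r y)).im)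
      ((((-Real.sin x : ℝ) + (Real.cos x : ℝ) * Complex.I) / zf r x).im) x :=
    (Complex.imCLM.hasFDerivAt.comp_hasDerivAt x hlog)
  have heq : (fun y => (Complex.log (zf r y)).im) = fun y => Complex.arg (zf r y) := by
    funext y; exact Complex.log_im _
  rw [heq] at him
  convert him using 1
  rw [Complex.div_im, zf_normSq, zf_re, zf_im]
  simp only [Complex.add_im, Complex.ofReal_im, Complex.mul_im, Complex.I_im, Complex.I_re,
    Complex.ofReal_re, Complex.add_re, Complex.mul_re]
  have hD := hDpos hr0 hr1 x
  field_simp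
  nlinarith [Real.sin_sq_add_cos_sq x]

lemma Rt_deriv {r : ℝ} (hr0 : 0 < r) (hr1 : r < 1) (Ω : ℝ) {x : ℝ} (hx : Real.cos x ≠ -1) :
    HasDerivAt (Rt r Ω) (F1 r x) x := by
  have harg := arg_deriv hr0 hr1 hx
  have h : HasDerivAt (fun y => y + Ω - 2 * (Complex.arg (zf r y) - y))
      (1 - 2 * ((1 - r * Real.cos x) / Dd r x - 1)) x :=
    ((hasDerivAt_id x).add_const Ω).sub ((harg.sub (hasDerivAt_id x)).const_mul 2)
  have heq : (fun y => y + Ω - 2 * (Complex.arg (zf r y) - y)) = Rt r Ω := by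
    funext y; simp only [Rt, iota, zf]
  rw [heq] at h
  convert h using 1
  have hD0 : Dd r x ≠ 0 := ne_of_gt (hDpos hr0 hr1 x)
  unfold F1
  field_simp
  unfold Dd
  ring

lemma F1_deriv {r : ℝ} (hr0 : 0 < r) (hr1 : r < 1) (x : ℝ) :
    HasDerivAt (F1 r) (F2 r x) x := by
  have hD := hDpos hr0 hr1 x
  have hnum : HasDerivAt (fun y => 1 - 4 * r * Real.cos y + 3 * r ^ 2)
      (4 * r * Real.sin x) x := by
    have := ((Real.hasDerivAt_cos x).const_mul (4 * r))
    have h2 : HasDerivAt (fun y => 1 - 4 * r * Real.cos y + 3 * r ^ 2)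
        (-(4 * r * -Real.sin x)) x :=
      (((((Real.hasDerivAt_cos x).const_mul (4 * r)).const_sub 1)).add_const (3 * r ^ 2))
    convert h2 using 1; ring
  have hden : HasDerivAt (fun y => Dd r y) (2 * r * Real.sin x) x := by
    have h2 : HasDerivAt (fun y => 1 - 2 * r * Real.cos y + r ^ 2)
        (-(2 * r * -Real.sin x)) x :=
      (((((Real.hasDerivAt_cos x).const_mul (2 * r)).const_sub 1)).add_const (r ^ 2))
    have heq : (fun y => 1 - 2 * r * Real.cos y + r ^ 2) = Dd r := by
      funext y; simp only [Dd]
    rw [heq] at h2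
    convert h2 using 1; ring
  have h : HasDerivAt (F1 r) _ x :=
    hnum.div hden (ne_of_gt hD)
  convert h using 1
  have hD0 : Dd r x ≠ 0 := ne_of_gt hD
  unfold F2
  field_simp
  unfold Dd
  ring

lemma F2_deriv {r : ℝ} (hr0 : 0 < r) (hr1 : r < 1) (x : ℝ) :
    HasDerivAt (F2 r) (F3 r x) x := by
  have hD := hDpos hr0 hr1 x
  have hnum : HasDerivAt (fun y => 2 * r * (1 - r ^ 2) * Real.sin y)
      (2 * r * (1 - r ^ 2) * Real.cos x) x :=
    (Real.hasDerivAt_sin x).const_mul (2 * r * (1 - r ^ 2))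
  have hden : HasDerivAt (fun y => (Dd r y) ^ 2) (2 * Dd r x * (2 * r * Real.sin x)) x := by
    have h2 : HasDerivAt (fun y => 1 - 2 * r * Real.cos y + r ^ 2)
        (-(2 * r * -Real.sin x)) x :=
      (((((Real.hasDerivAt_cos x).const_mul (2 * r)).const_sub 1)).add_const (r ^ 2))
    have heq : (fun y => 1 - 2 * r * Real.cos y + r ^ 2) = Dd r := by
      funext y; simp only [Dd]
    rw [heq] at h2
    have : HasDerivAt (fun y => Dd r y ^ 2) _ x := h2.pow 2
    convert this using 1; unfold Dd; ring
  have h : HasDerivAt (F2 r) _ x :=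
    hnum.div hden (by positivity)
  convert h using 1
  have hD0 : Dd r x ≠ 0 := ne_of_gt hD
  have hsc := Real.sin_sq_add_cos_sq x
  have key : (1 + r ^ 2) * Real.cos x - 2 * r * (1 + Real.sin x ^ 2)
      = Real.cos x * Dd r x - 4 * r * Real.sin x ^ 2 := by
    unfold Dd
    linear_combination (2 * r) * hsc
  unfold F3
  rw [key]
  field_simp
  ring

lemma bad_case {r : ℝ} (hr0 : 0 < r) (hr1 : r < 1) (Ω : ℝ) {x : ℝ} (hx : Real.cos x = -1)
    (hd : DifferentiableAt ℝ (Rt r Ω) x) : False := by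
  have hsin : Real.sin x = 0 := by
    have h2 : Real.sin x ^ 2 = 0 := by nlinarith [Real.sin_sq_add_cos_sq x]
    exact pow_eq_zero_iff (n := 2) (by norm_num) |>.mp h2
  have hcont : ContinuousAt (fun y => Complex.arg (zf r y)) x := by
    have h1 : ContinuousAt (fun y => (3 * y + Ω - Rt r Ω y) / 2) x :=
      (((continuousAt_id.const_mul 3).add continuousAt_const).sub hd.continuousAt).div_const 2
    have heq : (fun y => Complex.arg (zf r y)) = fun y => (3 * y + Ω - Rt r Ω y) / 2 := by
      funext y; simp only [Rt, iota, zf]; ring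
    rw [heq]; exact h1
  have hzfx : zf r x = ((-1 - r : ℝ) : ℂ) := by
    apply Complex.ext
    · rw [zf_re, hx]; simp
    · rw [zf_im, hsin]; simp
  have hargx : Complex.arg (zf r x) = π := by
    rw [hzfx]; exact Complex.arg_ofReal_of_neg (by linarith)
  have T1 : Filter.Tendsto (fun y => Complex.arg (zf r y)) (nhdsWithin x (Set.Ioi x)) (nhds π) := by
    rw [← hargx]
    exact hcont.tendsto.mono_left nhdsWithin_le_nhds
  have hzcont : Continuous (zf r) := by
    unfold zf
    exact (Complex.continuous_ofReal.comp (Real.continuous_cos.sub continuous_const)).add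
      ((Complex.continuous_ofReal.comp Real.continuous_sin).mul continuous_const)
  have hmem : ∀ᶠ y in nhdsWithin x (Set.Ioi x), (zf r y) ∈ {z : ℂ | z.im < 0} := by
    filter_upwards [Ioo_mem_nhdsGT_of_mem (Set.mem_Ico.mpr ⟨le_refl x, show x < x + π by linarith [Real.pi_pos]⟩)]
      with y hy
    rcases hy with ⟨hy1, hy2⟩
    have hs : Real.sin y < 0 := by
      have : Real.sin y = Real.sin (x + (y - x)) := by ring_nf
      rw [this, Real.sin_add, hsin, hx]
      have : 0 < Real.sin (y - x) := Real.sin_pos_of_pos_of_lt_pi (by linarith) (by linarith)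
      nlinarith
    simpa [zf_im] using hs
  have hzT : Filter.Tendsto (zf r) (nhdsWithin x (Set.Ioi x))
      (nhdsWithin (zf r x) {z : ℂ | z.im < 0}) := by
    rw [tendsto_nhdsWithin_iff]
    exact ⟨(hzcont.tendsto x).mono_left nhdsWithin_le_nhds, hmem⟩
  have T2 : Filter.Tendsto (fun y => Complex.arg (zf r y)) (nhdsWithin x (Set.Ioi x))
      (nhds (-π)) := by
    have hre : (zf r x).re < 0 := by rw [zf_re, hx]; linarith
    have him : (zf r x).im = 0 := by rw [zf_im, hsin]
    exact (Complex.tendsto_arg_nhdsWithin_im_neg_of_re_neg_of_im_zero hre him).comp hzT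
  have : π = -π := tendsto_nhds_unique T1 T2
  linarith [Real.pi_pos]

theorem stmt_6 (r : ℝ) (hr0 : 1 / 3 < r) (hr1 : r < 1) (Ω x : ℝ)
    (hne : deriv (Rt r Ω) x ≠ 0) :
    iteratedDeriv 3 (Rt r Ω) x / deriv (Rt r Ω) x -
        3 / 2 * (iteratedDeriv 2 (Rt r Ω) x / deriv (Rt r Ω) x) ^ 2 < 0 ∧
    iteratedDeriv 3 (Rt r Ω) x / deriv (Rt r Ω) x -
        3 / 2 * (iteratedDeriv 2 (Rt r Ω) x / deriv (Rt r Ω) x) ^ 2 =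
      r * (1 - r ^ 2) * H r (Real.cos x) /
        ((1 - 4 * r * Real.cos x + 3 * r ^ 2) ^ 2 *
          (1 - 2 * r * Real.cos x + r ^ 2) ^ 2) ∧
    H r (Real.cos x) < 0 := by
  have hr0' : 0 < r := by linarith
  by_cases hx : Real.cos x = -1
  · exfalso
    apply bad_case hr0' hr1 Ω hx
    by_contra hnd
    exact hne (deriv_zero_of_not_differentiableAt hnd)
  · have hUopen : IsOpen {y : ℝ | Real.cos y ≠ -1} :=
      isOpen_compl_singleton.preimage Real.continuous_cos
    have hder : ∀ y, Real.cos y ≠ -1 → deriv (Rt r Ω) y = F1 r y := fun y hy =>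
      (Rt_deriv hr0' hr1 Ω hy).deriv
    have h2 : ∀ y, Real.cos y ≠ -1 → deriv (deriv (Rt r Ω)) y = F2 r y := by
      intro y hy
      have evy : deriv (Rt r Ω) =ᶠ[nhds y] F1 r :=
        Filter.eventuallyEq_of_mem (hUopen.mem_nhds hy) fun z hz => hder z hz
      rw [evy.deriv_eq]
      exact (F1_deriv hr0' hr1 y).deriv
    have h3 : deriv (deriv (deriv (Rt r Ω))) x = F3 r x := by
      have ev2 : deriv (deriv (Rt r Ω)) =ᶠ[nhds x] F2 r :=
        Filter.eventuallyEq_of_mem (hUopen.mem_nhds hx) fun z hz => h2 z hz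
      rw [ev2.deriv_eq]
      exact (F2_deriv hr0' hr1 x).deriv
    have hd1 : deriv (Rt r Ω) x = F1 r x := hder x hx
    have hi2 : iteratedDeriv 2 (Rt r Ω) x = F2 r x := by
      rw [iteratedDeriv_succ, iteratedDeriv_one]
      exact h2 x hx
    have hi3 : iteratedDeriv 3 (Rt r Ω) x = F3 r x := by
      rw [iteratedDeriv_succ, iteratedDeriv_succ, iteratedDeriv_one]
      exact h3
    rw [hd1, hi2, hi3]
    have hF1 : F1 r x ≠ 0 := hd1 ▸ hne
    have hD := hDpos hr0' hr1 x
    have hD0' : 1 - 2 * r * Real.cos x + r ^ 2 ≠ 0 := by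
      have : Dd r x ≠ 0 := ne_of_gt hD
      unfold Dd at this; exact this
    have hA : 1 - 4 * r * Real.cos x + 3 * r ^ 2 ≠ 0 := by
      intro h
      apply hF1
      unfold F1
      rw [h]
      simp
    have hy1 : Real.cos x ≤ 1 := Real.cos_le_one x
    have hy2 : -1 ≤ Real.cos x := Real.neg_one_le_cos x
    have hH : H r (Real.cos x) < 0 := by
      unfold H
      nlinarith [mul_pos (pow_pos (sub_pos.2 hr1) 3) (by linarith : (0:ℝ) < 3 * r - 1),
        mul_nonneg (sq_nonneg (1 - Real.cos x))
          (by positivity : (0:ℝ) ≤ 6 * r ^ 4 + 24 * r ^ 2 + 2),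
        mul_nonneg (mul_nonneg (by linarith : (0:ℝ) ≤ 1 - Real.cos x)
          (by linarith : (0:ℝ) ≤ 1 + Real.cos x))
          (by positivity : (0:ℝ) ≤ (r - 1) ^ 2 * (3 * r ^ 2 + 4 * r + 1)),
        mul_nonneg (mul_nonneg (sq_nonneg (1 - Real.cos x))
          (by linarith : (0:ℝ) ≤ 1 + Real.cos x)) (sq_nonneg r)]
    have heqn : F3 r x / F1 r x - 3 / 2 * (F2 r x / F1 r x) ^ 2 =
        r * (1 - r ^ 2) * H r (Real.cos x) /
          ((1 - 4 * r * Real.cos x + 3 * r ^ 2) ^ 2 *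
            (1 - 2 * r * Real.cos x + r ^ 2) ^ 2) := by
      have hF3' : F3 r x = 2 * r * (1 - r ^ 2) *
          ((1 + r ^ 2) * Real.cos x - 2 * r * (2 - Real.cos x ^ 2)) / (Dd r x) ^ 3 := by
        unfold F3
        rw [Real.sin_sq]
        ring
      have hF2sq : (F2 r x) ^ 2 =
          (2 * r * (1 - r ^ 2)) ^ 2 * (1 - Real.cos x ^ 2) / (Dd r x) ^ 4 := by
        unfold F2
        rw [← Real.sin_sq]
        ring
      rw [div_pow, hF2sq, hF3']
      unfold F1 H Dd
      field_simp
      ring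
    rw [heqn]
    refine ⟨?_, rfl, hH⟩
    apply div_neg_of_neg_of_pos
    · have : 0 < r * (1 - r ^ 2) := by nlinarith
      exact mul_neg_of_pos_of_neg this hH
    · positivity
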